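/- arXiv:1805.00301 — 2 statements merged into one kernel-verified Lean document; each statement's English description precedes it below -/
import Mathlib

section
/- If G is a finite abelian group and H ≤ K are subgroups of G, then α(H) ≥ α(K), i.e., the function α is decreasing on the subgroup lattice of a finite abelian group. -/
open Subgroup Finset

/-- The subgroup `zpowers g` is cyclic. -/
lemma aux_isCyclic_zpowers {G : Type*} [Group G] (g : G) : IsCyclic (zpowers g) :=
  ⟨⟨⟨g, mem_zpowers g⟩, fun x => by
    obtain ⟨n, hn⟩ := x.2
    exact ⟨n, Subtype.ext (by simpa using hn)⟩⟩⟩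

/-- A cyclic subgroup is `zpowers` of some element. -/
lemma aux_exists_zpowers_eq {G : Type*} [Group G] (C : Subgroup G) [h : IsCyclic C] :
    ∃ g : G, zpowers g = C := by
  obtain ⟨⟨g, hg⟩, hgen⟩ := h.exists_generator
  refine ⟨g, le_antisymm (zpowers_le.mpr hg) fun x hx => ?_⟩
  obtain ⟨n, hn⟩ := hgen ⟨x, hx⟩
  exact ⟨n, by simpa using congrArg Subtype.val hn⟩

/-- The image of a cyclic subgroup under a group hom is cyclic. -/
lemma aux_isCyclic_map {G G' : Type*} [Group G] [Group G'] (f : G →* G') (C : Subgroup G)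
    [IsCyclic C] : IsCyclic (C.map f) := by
  obtain ⟨g, hg⟩ := aux_exists_zpowers_eq C
  rw [← hg, MonoidHom.map_zpowers]
  exact aux_isCyclic_zpowers _

/-- Generators of a subgroup `C` correspond to elements of `C` of full order. -/
def aux_gensEquiv {G : Type*} [Group G] [Finite G] (C : Subgroup G) :
    {x : G // zpowers x = C} ≃ {y : C // orderOf y = Nat.card C} where
  toFun x := ⟨⟨x.1, le_of_eq x.2 (mem_zpowers x.1)⟩, by
    rw [Subgroup.orderOf_mk, ← Nat.card_zpowers, x.2]⟩
  invFun y := ⟨y.1.1, by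
    have h1 : orderOf (y.1 : G) = Nat.card C := by rw [Subgroup.orderOf_coe, y.2]
    refine Subgroup.eq_of_le_of_card_ge (zpowers_le.mpr y.1.2) ?_
    rw [Nat.card_zpowers, h1]⟩
  left_inv x := rfl
  right_inv y := rfl

/-- A cyclic subgroup of order `n` has `φ(n)` generators. -/
lemma aux_card_gens {G : Type*} [Group G] [Finite G] (C : Subgroup G) [IsCyclic C] :
    Nat.card {x : G // zpowers x = C} = Nat.totient (Nat.card C) := by
  rw [Nat.card_congr (aux_gensEquiv C)]
  classical
  letI : Fintype C := Fintype.ofFinite C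
  rw [Nat.card_eq_fintype_card (α := {y : C // orderOf y = Nat.card C}), Fintype.card_subtype]
  simpa [Nat.card_eq_fintype_card] using
    IsCyclic.card_orderOf_eq_totient (α := C) (d := Fintype.card C) dvd_rfl

/-- Counting lemma: `c(K) ≤ |N| * c(K/N)`. -/
lemma aux_card_cyclic_le_quot (K : Type*) [Group K] [Finite K] (N : Subgroup K) [N.Normal] :
    Nat.card {C : Subgroup K // IsCyclic C} ≤
      Nat.card N * Nat.card {D : Subgroup (K ⧸ N) // IsCyclic D} := by
  classical
  letI : Fintype K := Fintype.ofFinite K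
  letI : Fintype (K ⧸ N) := Fintype.ofFinite _
  letI : Fintype (Subgroup K) := Fintype.ofFinite _
  letI : Fintype (Subgroup (K ⧸ N)) := Fintype.ofFinite _
  set π := QuotientGroup.mk' N with hπ
  set A : Finset (Subgroup K) := univ.filter (fun C => IsCyclic C) with hA
  set B : Finset (Subgroup (K ⧸ N)) := univ.filter (fun D => IsCyclic D) with hB
  have hcardA : Nat.card {C : Subgroup K // IsCyclic C} = A.card := by
    rw [Nat.card_eq_fintype_card, Fintype.card_subtype]
  have hcardB : Nat.card {D : Subgroup (K ⧸ N) // IsCyclic D} = B.card := by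
    rw [Nat.card_eq_fintype_card, Fintype.card_subtype]
  rw [hcardA, hcardB]
  have hmapped : ∀ C ∈ A, C.map π ∈ B := by
    intro C hC
    have : IsCyclic C := (mem_filter.mp hC).2
    exact mem_filter.mpr ⟨mem_univ _, aux_isCyclic_map π C⟩
  rw [Finset.card_eq_sum_card_fiberwise hmapped, mul_comm]
  refine le_trans (Finset.sum_le_card_nsmul _ _ (Nat.card N) ?_) (by simp [mul_comm])
  intro D hD
  have hDcyc : IsCyclic D := (mem_filter.mp hD).2
  set d := Nat.card D with hd
  have hdpos : 0 < d := Nat.card_pos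
  set fib : Finset (Subgroup K) := A.filter (fun C => C.map π = D) with hfib
  set gens : Subgroup K → Finset K := fun C => univ.filter (fun x => zpowers x = C) with hgens
  set S : Finset K := univ.filter (fun x => zpowers (π x) = D) with hS
  have h1 : ∀ C ∈ fib, gens C ⊆ S := by
    intro C hC x hx
    have hx' : zpowers x = C := (mem_filter.mp hx).2
    have hC' : C.map π = D := (mem_filter.mp hC).2
    refine mem_filter.mpr ⟨mem_univ _, ?_⟩
    rw [← MonoidHom.map_zpowers, hx', hC']
  have h2 : ∀ C ∈ fib, ∀ C' ∈ fib, C ≠ C' → Disjoint (gens C) (gens C') := by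
    intro C _ C' _ hne
    refine Finset.disjoint_left.mpr fun x hx hx' => hne ?_
    rw [← (mem_filter.mp hx).2, (mem_filter.mp hx').2]
  have h3 : ∀ C ∈ fib, Nat.totient d ≤ (gens C).card := by
    intro C hC
    have hCcyc : IsCyclic C := (mem_filter.mp (mem_filter.mp hC).1).2
    have hC' : C.map π = D := (mem_filter.mp hC).2
    have hcard : (gens C).card = Nat.totient (Nat.card C) := by
      rw [← aux_card_gens C, Nat.card_eq_fintype_card, Fintype.card_subtype]
    have hdvd : d ∣ Nat.card C := by
      rw [hd, ← hC']
      exact Subgroup.card_dvd_of_surjective _ (π.subgroupMap_surjective C)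
    rw [hcard]
    exact Nat.le_of_dvd (Nat.totient_pos.mpr Nat.card_pos) (Nat.totient_dvd_of_dvd hdvd)
  have hScard : S.card = Nat.totient d * Nat.card N := by
    have e1 : S.card = Nat.card {x : K // zpowers (π x) = D} := by
      rw [Nat.card_eq_fintype_card, Fintype.card_subtype]
    have e2 : Nat.card {x : K // zpowers (π x) = D}
        = Nat.card ((QuotientGroup.mk : K → K ⧸ N) ⁻¹' {y : K ⧸ N | zpowers y = D}) :=
      Nat.card_congr (Equiv.subtypeEquivRight fun x => Iff.rfl)
    have e3 : Nat.card ((QuotientGroup.mk : K → K ⧸ N) ⁻¹' {y : K ⧸ N | zpowers y = D})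
        = Nat.card N * Nat.card {y : K ⧸ N // zpowers y = D} := by
      rw [Nat.card_congr (QuotientGroup.preimageMkEquivSubgroupProdSet N _), Nat.card_prod]
      rfl
    rw [e1, e2, e3, aux_card_gens D, mul_comm]
  have key : fib.card * Nat.totient d ≤ Nat.totient d * Nat.card N := by
    calc fib.card * Nat.totient d ≤ ∑ C ∈ fib, (gens C).card := by
          simpa using Finset.card_nsmul_le_sum fib _ _ h3
      _ = (fib.biUnion gens).card := (Finset.card_biUnion h2).symm
      _ ≤ S.card := Finset.card_le_card (Finset.biUnion_subset.mpr h1)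
      _ = Nat.totient d * Nat.card N := hScard
  exact Nat.le_of_mul_le_mul_right (by rw [mul_comm (Nat.totient d)] at key; exact key)
    (Nat.totient_pos.mpr hdpos)

/-- The number of cyclic subgroups is invariant under group isomorphism. -/
lemma aux_card_cyclic_congr {G G' : Type*} [Group G] [Group G'] (e : G ≃* G') :
    Nat.card {C : Subgroup G // IsCyclic C} = Nat.card {D : Subgroup G' // IsCyclic D} := by
  refine Nat.card_congr (Equiv.subtypeEquiv (e.mapSubgroup).toEquiv fun C => ?_)
  constructor
  · intro h
    exact aux_isCyclic_map (e : G →* G') C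
  · intro h
    haveI h' : IsCyclic (C.map (e : G →* G')) := h
    have h2 : IsCyclic ((C.map (e : G →* G')).map (e.symm : G' →* G)) :=
      aux_isCyclic_map _ _
    rwa [Subgroup.map_map, show (e.symm : G' →* G).comp (e : G →* G') = MonoidHom.id G by
      ext x; simp, Subgroup.map_id] at h2

section Duality
variable (A : Type*) [CommGroup A] [Finite A]

lemma aux_hasEnough : HasEnoughRootsOfUnity ℂ (Monoid.exponent A) := by
  have : NeZero ((Monoid.exponent A : ℕ) : ℂ) :=
    ⟨Nat.cast_ne_zero.mpr (Monoid.ExponentExists.exponent_ne_zero (Monoid.ExponentExists.of_finite))⟩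
  infer_instance

lemma aux_dual_card : Nat.card (A →* ℂˣ) = Nat.card A := by
  haveI := aux_hasEnough A
  exact Nat.card_congr (CommGroup.monoidHom_mulEquiv_of_hasEnoughRootsOfUnity A ℂ).some.toEquiv

lemma aux_dual_equiv : Nonempty ((A →* ℂˣ) ≃* A) := by
  haveI := aux_hasEnough A
  exact CommGroup.monoidHom_mulEquiv_of_hasEnoughRootsOfUnity A ℂ

end Duality

set_option maxHeartbeats 1000000 in
set_option synthInstance.maxHeartbeats 400000 in
/-- Every subgroup of a finite abelian group is isomorphic to a quotient. -/
lemma aux_exists_quotient_mulEquiv (K : Type*) [CommGroup K] [Finite K] (H : Subgroup K) :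
    ∃ N : Subgroup K, Nonempty (K ⧸ N ≃* H) := by
  haveI hfin : Finite (K →* ℂˣ) := Finite.of_equiv K (aux_dual_equiv K).some.toEquiv.symm
  let Φ : (K →* ℂˣ) →* (H →* ℂˣ) :=
    { toFun := fun χ => χ.comp H.subtype
      map_one' := by ext; simp
      map_mul' := fun χ₁ χ₂ => by ext; simp }
  have eker : Nat.card Φ.ker = Nat.card (K ⧸ H) := by
    have : Function.Bijective (fun g : (K ⧸ H) →* ℂˣ =>
        (⟨g.comp (QuotientGroup.mk' H), by
          ext h
          simp [Φ, (QuotientGroup.eq_one_iff (h : K)).mpr h.2]⟩ : Φ.ker)) := by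
      constructor
      · intro g g' hgg'
        have := congrArg (fun x : Φ.ker => (x : K →* ℂˣ)) hgg'
        exact MonoidHom.cancel_right (QuotientGroup.mk'_surjective H) |>.mp this
      · rintro ⟨χ, hχ⟩
        have hχ' : ∀ h : K, h ∈ H → χ h = 1 := by
          intro h hh
          have := congrFun (congrArg (fun f : H →* ℂˣ => (f : H → ℂˣ)) hχ) ⟨h, hh⟩
          simpa [Φ] using this
        refine ⟨QuotientGroup.lift H χ hχ', ?_⟩
        apply Subtype.ext
        ext x
        simp
        rfl
    rw [← Nat.card_congr (Equiv.ofBijective _ this)]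
    exact aux_dual_card (K ⧸ H)
  haveI : Nonempty Φ.ker := ⟨1⟩
  haveI : Finite Φ.ker := Subgroup.instFiniteSubtypeMem _
  haveI hfinH : Finite (H →* ℂˣ) := Finite.of_equiv H (aux_dual_equiv H).some.toEquiv.symm
  haveI : Finite Φ.range := Subgroup.instFiniteSubtypeMem _
  have hsurj : Function.Surjective Φ := by
    have h1 : Nat.card ((K →* ℂˣ) ⧸ Φ.ker) * Nat.card Φ.ker = Nat.card (K →* ℂˣ) :=
      (Subgroup.card_eq_card_quotient_mul_card_subgroup Φ.ker).symm
    have h2 : Nat.card ((K →* ℂˣ) ⧸ Φ.ker) = Nat.card Φ.range :=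
      Nat.card_congr (QuotientGroup.quotientKerEquivRange Φ).toEquiv
    have h3 : Nat.card K = Nat.card (K ⧸ H) * Nat.card H :=
      Subgroup.card_eq_card_quotient_mul_card_subgroup H
    have h4 : Nat.card Φ.range * Nat.card Φ.ker = Nat.card H * Nat.card Φ.ker := by
      rw [← h2, h1, aux_dual_card K, h3, eker]; ring
    have h5 : Nat.card Φ.range = Nat.card H :=
      Nat.eq_of_mul_eq_mul_right Nat.card_pos h4
    have h6 : Φ.range = ⊤ := Subgroup.eq_top_of_card_eq _ (by rw [h5, aux_dual_card H])
    exact MonoidHom.range_eq_top.mp h6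
  obtain ⟨eK⟩ := aux_dual_equiv K
  obtain ⟨eH⟩ := aux_dual_equiv H
  let ψ : K →* (H →* ℂˣ) := Φ.comp (eK.symm : K →* (K →* ℂˣ))
  have hψ : Function.Surjective ψ := hsurj.comp eK.symm.surjective
  exact ⟨ψ.ker, ⟨(QuotientGroup.quotientKerEquivOfSurjective ψ hψ).trans eH⟩⟩

/-- `α(G) = |L₁(G)| / |G|`, where `L₁(G)` is the set of cyclic subgroups of `G`. -/
noncomputable def alpha (G : Type*) [Group G] : ℚ :=
  (Nat.card {H : Subgroup G // IsCyclic H} : ℚ) / (Nat.card G : ℚ)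

lemma alpha_mulEquiv {G G' : Type*} [Group G] [Group G'] (e : G ≃* G') :
    alpha G = alpha G' := by
  unfold alpha
  rw [aux_card_cyclic_congr e, Nat.card_congr e.toEquiv]

lemma alpha_le_subgroup (K : Type*) [CommGroup K] [Finite K] (H : Subgroup K) :
    alpha K ≤ alpha H := by
  obtain ⟨N, ⟨e⟩⟩ := aux_exists_quotient_mulEquiv K H
  rw [← alpha_mulEquiv e]
  unfold alpha
  have hK : Nat.card K = Nat.card (K ⧸ N) * Nat.card N :=
    Subgroup.card_eq_card_quotient_mul_card_subgroup N
  have hcount := aux_card_cyclic_le_quot K N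
  have hQpos : (0 : ℚ) < (Nat.card (K ⧸ N) : ℚ) := by exact_mod_cast Nat.card_pos
  have hKpos : (0 : ℚ) < (Nat.card K : ℚ) := by exact_mod_cast Nat.card_pos
  rw [div_le_div_iff₀ hKpos hQpos]
  have hNat : Nat.card {C : Subgroup K // IsCyclic C} * Nat.card (K ⧸ N)
      ≤ Nat.card {D : Subgroup (K ⧸ N) // IsCyclic D} * Nat.card K := by
    rw [hK]
    calc Nat.card {C : Subgroup K // IsCyclic C} * Nat.card (K ⧸ N)
        ≤ (Nat.card N * Nat.card {D : Subgroup (K ⧸ N) // IsCyclic D}) * Nat.card (K ⧸ N) :=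
          Nat.mul_le_mul_right _ hcount
      _ = Nat.card {D : Subgroup (K ⧸ N) // IsCyclic D} * (Nat.card (K ⧸ N) * Nat.card N) := by
          ring
  exact_mod_cast hNat

theorem stmt_3 (G : Type*) [CommGroup G] [Finite G] (H K : Subgroup G) (hHK : H ≤ K) :
    alpha K ≤ alpha H := by
  have h1 : alpha K ≤ alpha (H.subgroupOf K) := alpha_le_subgroup K (H.subgroupOf K)
  rwa [alpha_mulEquiv (Subgroup.subgroupOfEquivOfLe hHK)] at h1
end

section
/- No finite extraspecial 2-group G satisfies α(G) = 3/4. -/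
open Subgroup
open scoped commutatorElement

section Aux
variable {G : Type*} [Group G] [Finite G]

lemma center_sq (h3 : Nat.card (Subgroup.center G) = 2) {w : G}
    (hw : w ∈ Subgroup.center G) : w ^ 2 = 1 := by
  have h : (⟨w, hw⟩ : Subgroup.center G) ^ 2 = 1 := by
    rw [← h3]; exact pow_card_eq_one'
  simpa [Subtype.ext_iff] using h

lemma center_unique (h3 : Nat.card (Subgroup.center G) = 2) {a b : G}
    (ha : a ∈ Subgroup.center G) (hb : b ∈ Subgroup.center G)
    (ha1 : a ≠ 1) (hb1 : b ≠ 1) : a = b := by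
  by_contra hab
  classical
  have : Fintype G := Fintype.ofFinite G
  have hcard : Fintype.card (Subgroup.center G) = 2 := by
    rw [← Nat.card_eq_fintype_card, h3]
  have h1 : ({1, ⟨a, ha⟩, ⟨b, hb⟩} : Finset (Subgroup.center G)).card = 3 := by
    rw [Finset.card_insert_of_notMem, Finset.card_insert_of_notMem, Finset.card_singleton]
    · simp [Subtype.ext_iff, hab]
    · simp [Subtype.ext_iff, Ne.symm ha1, Ne.symm hb1]
  have h2 := Finset.card_le_univ ({1, ⟨a, ha⟩, ⟨b, hb⟩} : Finset (Subgroup.center G))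
  rw [h1, hcard] at h2
  omega

lemma sq_mem_center (hc : ∀ g h : G, ⁅g, h⁆ ∈ Subgroup.center G)
    (h3 : Nat.card (Subgroup.center G) = 2) (g : G) : g ^ 2 ∈ Subgroup.center G := by
  rw [Subgroup.mem_center_iff]
  intro y
  have hk : y * g * y⁻¹ * g⁻¹ ∈ Subgroup.center G := by
    have := hc y g
    rwa [commutatorElement_def] at this
  set c := y * g * y⁻¹ * g⁻¹ with hcdef
  have hc2 : c ^ 2 = 1 := center_sq h3 hk
  have hcomm : g * c = c * g := Subgroup.mem_center_iff.1 hk g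
  have e1 : y * g * y⁻¹ = c * g := by rw [hcdef]; group
  have e3 : y * g ^ 2 * y⁻¹ = g ^ 2 := by
    calc y * g ^ 2 * y⁻¹ = (y * g * y⁻¹) * (y * g * y⁻¹) := by rw [pow_two]; group
    _ = (c * g) * (c * g) := by rw [e1]
    _ = c * (g * c) * g := by group
    _ = c * (c * g) * g := by rw [hcomm]
    _ = c ^ 2 * g ^ 2 := by rw [pow_two, pow_two]; group
    _ = g ^ 2 := by rw [hc2, one_mul]
  rw [mul_inv_eq_iff_eq_mul] at e3
  exact e3

lemma pow_four (hc : ∀ g h : G, ⁅g, h⁆ ∈ Subgroup.center G)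
    (h3 : Nat.card (Subgroup.center G) = 2) (g : G) : g ^ 4 = 1 := by
  have := center_sq h3 (sq_mem_center hc h3 g)
  calc g ^ 4 = (g ^ 2) ^ 2 := by group
  _ = 1 := this

end Aux

section Count
variable {G : Type*} [Group G] [Finite G]

lemma isCyclic_zpowers (g : G) : IsCyclic (Subgroup.zpowers g) := by
  refine ⟨⟨⟨g, Subgroup.mem_zpowers g⟩, ?_⟩⟩
  rintro ⟨x, hx⟩
  obtain ⟨k, hk⟩ := Subgroup.mem_zpowers_iff.1 hx
  exact Subgroup.mem_zpowers_iff.2 ⟨k, by ext; simp [hk]⟩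

lemma exists_zpowers_eq {H : Subgroup G} (hH : IsCyclic H) : ∃ g : G, Subgroup.zpowers g = H := by
  obtain ⟨⟨g, hg⟩, hgen⟩ := hH.exists_generator
  refine ⟨g, le_antisymm (Subgroup.zpowers_le.2 hg) ?_⟩
  intro x hx
  obtain ⟨k, hk⟩ := Subgroup.mem_zpowers_iff.1 (hgen ⟨x, hx⟩)
  exact Subgroup.mem_zpowers_iff.2 ⟨k, by simpa [Subtype.ext_iff] using hk⟩

lemma card_subtype_one {α : Type*} {p : α → Prop} {a : α} (h : ∀ x, p x ↔ x = a) :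
    Nat.card {x // p x} = 1 := by
  haveI : Unique {x // p x} :=
    ⟨⟨⟨a, (h a).2 rfl⟩⟩, fun x => Subtype.ext ((h x.1).1 x.2)⟩
  exact Nat.card_unique

lemma card_subtype_pair {α : Type*} {p : α → Prop} {a b : α} (hne : a ≠ b)
    (h : ∀ x, p x ↔ x = a ∨ x = b) : Nat.card {x // p x} = 2 := by
  have e : {x // p x} ≃ ({a, b} : Set α) :=
    Equiv.subtypeEquivRight (fun x => by simp [h x, Set.mem_insert_iff])
  rw [Nat.card_congr e, Nat.card_coe_set_eq, Set.ncard_pair hne]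

lemma card_subtype_zero {α : Type*} {p : α → Prop} (h : ∀ x, ¬ p x) :
    Nat.card {x // p x} = 0 := by
  haveI : IsEmpty {x // p x} := ⟨fun x => h x.1 x.2⟩
  exact Nat.card_of_isEmpty

lemma fiber_card (hc : ∀ g h : G, ⁅g, h⁆ ∈ Subgroup.center G)
    (h3 : Nat.card (Subgroup.center G) = 2) (H : Subgroup G) (hH : IsCyclic H) :
    Nat.card {g : G // Subgroup.zpowers g = H}
      + Nat.card {g : G // g ^ 2 = 1 ∧ Subgroup.zpowers g = H} = 2 := by
  obtain ⟨g₀, hg₀⟩ := exists_zpowers_eq hH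
  subst hg₀
  by_cases hsq : g₀ ^ 2 = 1
  · have key : ∀ g : G, Subgroup.zpowers g = Subgroup.zpowers g₀ ↔ g = g₀ := by
      intro g
      constructor
      · intro e
        obtain ⟨k, hk⟩ := Subgroup.mem_zpowers_iff.1 (e ▸ Subgroup.mem_zpowers g)
        have h2 : g₀ ^ (2 : ℤ) = 1 := by
          rw [show (2 : ℤ) = ((2 : ℕ) : ℤ) by norm_num, zpow_natCast, hsq]
        have hmod : g₀ ^ k = g₀ ^ (k % 2) := by
          conv_lhs => rw [← Int.emod_add_mul_ediv k 2]
          rw [zpow_add, zpow_mul, h2, one_zpow, mul_one]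
        have hk2 : k % 2 = 0 ∨ k % 2 = 1 := by omega
        rcases hk2 with h | h
        · have hg1 : g = 1 := by rw [← hk, hmod, h, zpow_zero]
          rw [hg1, Subgroup.zpowers_one_eq_bot, eq_comm, Subgroup.zpowers_eq_bot] at e
          rw [hg1, e]
        · rw [← hk, hmod, h, zpow_one]
      · rintro rfl; rfl
    rw [card_subtype_one key, card_subtype_one (a := g₀)
      (fun g => ⟨fun hx => (key g).1 hx.2, fun hx => by subst hx; exact ⟨hsq, rfl⟩⟩)]
  · have h4 : g₀ ^ 4 = 1 := pow_four hc h3 g₀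
    have hdvd : orderOf g₀ ∣ 4 := orderOf_dvd_of_pow_eq_one h4
    have ho : orderOf g₀ = 4 := by
      have hle := Nat.le_of_dvd (by norm_num) hdvd
      have hpos : 0 < orderOf g₀ := orderOf_pos g₀
      have hne1 : orderOf g₀ ≠ 1 := fun h => hsq (by
        rw [orderOf_eq_one_iff] at h
        simp [h])
      have hne2 : orderOf g₀ ≠ 2 := fun h => hsq (h ▸ pow_orderOf_eq_one g₀)
      have hne3 : orderOf g₀ ≠ 3 := fun h => by rw [h] at hdvd; norm_num at hdvd
      omega
    have hne : g₀ ≠ g₀⁻¹ := by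
      intro h
      exact hsq (by rw [pow_two]; nth_rewrite 2 [h]; simp)
    have h4z : g₀ ^ (4 : ℤ) = 1 := by
      rw [show (4 : ℤ) = ((4 : ℕ) : ℤ) by norm_num, zpow_natCast, h4]
    have key2 : ∀ g : G, Subgroup.zpowers g = Subgroup.zpowers g₀ ↔ g = g₀ ∨ g = g₀⁻¹ := by
      intro g
      constructor
      · intro e
        obtain ⟨k, hk⟩ := Subgroup.mem_zpowers_iff.1 (e ▸ Subgroup.mem_zpowers g)
        have hmod : g₀ ^ k = g₀ ^ (k % 4) := by
          conv_lhs => rw [← Int.emod_add_mul_ediv k 4]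
          rw [zpow_add, zpow_mul, h4z, one_zpow, mul_one]
        have hk4 : k % 4 = 0 ∨ k % 4 = 1 ∨ k % 4 = 2 ∨ k % 4 = 3 := by omega
        rcases hk4 with h | h | h | h
        · exfalso
          have hg1 : g = 1 := by rw [← hk, hmod, h, zpow_zero]
          rw [hg1, Subgroup.zpowers_one_eq_bot, eq_comm, Subgroup.zpowers_eq_bot] at e
          exact hsq (by rw [e]; simp)
        · left; rw [← hk, hmod, h, zpow_one]
        · exfalso
          have hg2 : g = g₀ ^ (2 : ℤ) := by rw [← hk, hmod, h]
          obtain ⟨m, hm⟩ := Subgroup.mem_zpowers_iff.1 (e.symm ▸ Subgroup.mem_zpowers g₀)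
          have : g₀ ^ (2 * m) = g₀ ^ (1 : ℤ) := by
            rw [zpow_mul, ← hg2, hm, zpow_one]
          have hdd : (orderOf g₀ : ℤ) ∣ 2 * m - 1 := orderOf_dvd_sub_iff_zpow_eq_zpow.2 this
          rw [ho] at hdd
          omega
        · right
          have h31 : g₀ ^ (3 : ℤ) = g₀⁻¹ := by
            rw [eq_inv_iff_mul_eq_one, show g₀ ^ (3 : ℤ) * g₀ = g₀ ^ (4 : ℤ) by group, h4z]
          rw [← hk, hmod, h, h31]
      · rintro (rfl | rfl)
        · rfl
        · exact Subgroup.zpowers_inv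
    rw [card_subtype_pair hne key2, card_subtype_zero (p := fun g => g ^ 2 = 1 ∧ _)
      (fun g hx => ?_)]
    rcases (key2 g).1 hx.2 with h | h
    · exact hsq (h ▸ hx.1)
    · apply hsq
      have := hx.1
      rw [h] at this
      simpa using this

lemma count_key (hc : ∀ g h : G, ⁅g, h⁆ ∈ Subgroup.center G)
    (h3 : Nat.card (Subgroup.center G) = 2) :
    2 * Nat.card {H : Subgroup G // IsCyclic H}
      = Nat.card G + Nat.card {g : G // g ^ 2 = 1} := by
  classical
  haveI : Fintype G := Fintype.ofFinite G
  let Φ : G → {H : Subgroup G // IsCyclic H} := fun g => ⟨Subgroup.zpowers g, _root_.isCyclic_zpowers g⟩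
  have hG : Nat.card G = ∑ H : {H : Subgroup G // IsCyclic H}, Nat.card {g : G // Φ g = H} := by
    calc Nat.card G
        = Nat.card (Σ H : {H : Subgroup G // IsCyclic H}, {g : G // Φ g = H}) :=
          (Nat.card_congr (Equiv.sigmaFiberEquiv Φ)).symm
      _ = _ := by
          rw [Nat.card_eq_fintype_card, Fintype.card_sigma]
          exact Finset.sum_congr rfl fun H _ => Nat.card_eq_fintype_card.symm
  have hs : Nat.card {g : G // g ^ 2 = 1}
      = ∑ H : {H : Subgroup G // IsCyclic H},
          Nat.card {x : {g : G // g ^ 2 = 1} // Φ x.1 = H} := by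
    calc Nat.card {g : G // g ^ 2 = 1}
        = Nat.card (Σ H : {H : Subgroup G // IsCyclic H},
            {x : {g : G // g ^ 2 = 1} // Φ x.1 = H}) :=
          (Nat.card_congr (Equiv.sigmaFiberEquiv fun x : {g : G // g ^ 2 = 1} => Φ x.1)).symm
      _ = _ := by
          rw [Nat.card_eq_fintype_card, Fintype.card_sigma]
          exact Finset.sum_congr rfl fun H _ => Nat.card_eq_fintype_card.symm
  have pointwise : ∀ H : {H : Subgroup G // IsCyclic H},
      Nat.card {g : G // Φ g = H} + Nat.card {x : {g : G // g ^ 2 = 1} // Φ x.1 = H} = 2 := by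
    intro H
    have e1 : {g : G // Φ g = H} ≃ {g : G // Subgroup.zpowers g = H.1} :=
      Equiv.subtypeEquivRight (fun g => by
        constructor
        · intro h; exact congrArg Subtype.val h
        · intro h; exact Subtype.ext h)
    have e2 : {x : {g : G // g ^ 2 = 1} // Φ x.1 = H}
        ≃ {g : G // g ^ 2 = 1 ∧ Subgroup.zpowers g = H.1} :=
      (Equiv.subtypeSubtypeEquivSubtypeInter (fun g : G => g ^ 2 = 1) (fun g => Φ g = H)).trans
        (Equiv.subtypeEquivRight (fun g => by
          constructor
          · rintro ⟨h1, h2⟩; exact ⟨h1, congrArg Subtype.val h2⟩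
          · rintro ⟨h1, h2⟩; exact ⟨h1, Subtype.ext h2⟩))
    rw [Nat.card_congr e1, Nat.card_congr e2]
    exact fiber_card hc h3 H.1 H.2
  calc 2 * Nat.card {H : Subgroup G // IsCyclic H}
      = ∑ _H : {H : Subgroup G // IsCyclic H}, 2 := by
        rw [Finset.sum_const, smul_eq_mul, Nat.card_eq_fintype_card, ← Finset.card_univ,
          Nat.mul_comm]
    _ = ∑ H : {H : Subgroup G // IsCyclic H},
          (Nat.card {g : G // Φ g = H} + Nat.card {x : {g : G // g ^ 2 = 1} // Φ x.1 = H}) :=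
        Finset.sum_congr rfl fun H _ => (pointwise H).symm
    _ = Nat.card G + Nat.card {g : G // g ^ 2 = 1} := by
        rw [Finset.sum_add_distrib, ← hG, ← hs]

end Count

section Char
variable {G : Type*} [Group G]

open scoped Classical in
/-- The sign character: 1 on the identity, -1 elsewhere (only used on the center). -/
noncomputable def chi (w : G) : ℤ := if w = 1 then 1 else -1

lemma chi_one : chi (1 : G) = 1 := if_pos rfl

lemma chi_ne_one {a : G} (h : a ≠ 1) : chi a = -1 := if_neg h

lemma chi_self_mul (a : G) : chi a * chi a = 1 := by
  by_cases h : a = 1 <;> simp [chi, h]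

lemma chi_mul [Finite G] (h3 : Nat.card (Subgroup.center G) = 2) {a b : G}
    (ha : a ∈ Subgroup.center G) (hb : b ∈ Subgroup.center G) :
    chi (a * b) = chi a * chi b := by
  by_cases h1 : a = 1
  · simp [h1, chi_one]
  · by_cases h2 : b = 1
    · simp [h2, chi_one]
    · have hab : a = b := center_unique h3 ha hb h1 h2
      have : a * b = 1 := by rw [hab, ← pow_two]; exact center_sq h3 hb
      rw [this, chi_one, chi_ne_one h1, chi_ne_one h2]; norm_num

lemma comm_mem (hc : ∀ g h : G, ⁅g, h⁆ ∈ Subgroup.center G) (u g : G) :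
    u⁻¹ * g⁻¹ * u * g ∈ Subgroup.center G := by
  have := hc u⁻¹ g⁻¹
  simpa [commutatorElement_def] using this

lemma mul_sq_eq (hc : ∀ g h : G, ⁅g, h⁆ ∈ Subgroup.center G) (g u : G) :
    (g * u) ^ 2 = g ^ 2 * u ^ 2 * (u⁻¹ * g⁻¹ * u * g) := by
  have hk := comm_mem hc u g
  have h1 : u * (u⁻¹ * g⁻¹ * u * g) = (u⁻¹ * g⁻¹ * u * g) * u :=
    Subgroup.mem_center_iff.1 hk u
  have h2 : u ^ 2 * (u⁻¹ * g⁻¹ * u * g) = (u⁻¹ * g⁻¹ * u * g) * u ^ 2 :=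
    Subgroup.mem_center_iff.1 hk (u ^ 2)
  calc (g * u) ^ 2
      = g * (g * (u * (u⁻¹ * g⁻¹ * u * g))) * u := by rw [pow_two]; group
    _ = g * (g * ((u⁻¹ * g⁻¹ * u * g) * u)) * u := by rw [h1]
    _ = g ^ 2 * ((u⁻¹ * g⁻¹ * u * g) * u ^ 2) := by rw [pow_two, pow_two]; group
    _ = g ^ 2 * (u ^ 2 * (u⁻¹ * g⁻¹ * u * g)) := by rw [← h2]
    _ = g ^ 2 * u ^ 2 * (u⁻¹ * g⁻¹ * u * g) := by group

end Char

section Sum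
variable {G : Type*} [Group G] [Fintype G]

lemma inner_sum_center {u : G} (hu : u ∈ Subgroup.center G) :
    (∑ g : G, chi (u⁻¹ * g⁻¹ * u * g)) = (Fintype.card G : ℤ) := by
  have : ∀ g : G, chi (u⁻¹ * g⁻¹ * u * g) = 1 := by
    intro g
    have hgu : g * u = u * g := Subgroup.mem_center_iff.1 hu g
    have he : u⁻¹ * g⁻¹ * u * g = 1 := by
      have : u⁻¹ * g⁻¹ * (u * g) = u⁻¹ * g⁻¹ * (g * u) := by rw [← hgu]
      calc u⁻¹ * g⁻¹ * u * g = u⁻¹ * g⁻¹ * (u * g) := by group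
        _ = u⁻¹ * g⁻¹ * (g * u) := this
        _ = 1 := by group
    rw [he, chi_one]
  rw [Finset.sum_congr rfl fun g _ => this g]
  simp

lemma inner_sum_notcenter (hc : ∀ g h : G, ⁅g, h⁆ ∈ Subgroup.center G)
    (h3 : Nat.card (Subgroup.center G) = 2)
    {u : G} (hu : u ∉ Subgroup.center G) :
    (∑ g : G, chi (u⁻¹ * g⁻¹ * u * g)) = 0 := by
  rw [Subgroup.mem_center_iff] at hu
  push_neg at hu
  obtain ⟨g₀, hg₀⟩ := hu
  have hk₀c : u⁻¹ * g₀⁻¹ * u * g₀ ∈ Subgroup.center G := comm_mem hc u g₀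
  have hk₀ : u⁻¹ * g₀⁻¹ * u * g₀ ≠ 1 := by
    intro h1
    apply hg₀
    have h2 := congrArg (fun x => g₀ * u * x) h1
    simpa [mul_assoc] using h2.symm
  have key : ∀ g : G, chi (u⁻¹ * (g₀ * g)⁻¹ * u * (g₀ * g))
      = - chi (u⁻¹ * g⁻¹ * u * g) := by
    intro g
    have hkc : u⁻¹ * g⁻¹ * u * g ∈ Subgroup.center G := comm_mem hc u g
    have hcomm : g * (u⁻¹ * g₀⁻¹ * u * g₀) = (u⁻¹ * g₀⁻¹ * u * g₀) * g :=
      Subgroup.mem_center_iff.1 hk₀c g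
    have hconj : g⁻¹ * (u⁻¹ * g₀⁻¹ * u * g₀) * g = u⁻¹ * g₀⁻¹ * u * g₀ := by
      calc g⁻¹ * (u⁻¹ * g₀⁻¹ * u * g₀) * g = g⁻¹ * ((u⁻¹ * g₀⁻¹ * u * g₀) * g) := by group
        _ = g⁻¹ * (g * (u⁻¹ * g₀⁻¹ * u * g₀)) := by rw [← hcomm]
        _ = u⁻¹ * g₀⁻¹ * u * g₀ := by group
    have hhom : u⁻¹ * (g₀ * g)⁻¹ * u * (g₀ * g)
        = (u⁻¹ * g⁻¹ * u * g) * (g⁻¹ * (u⁻¹ * g₀⁻¹ * u * g₀) * g) := by group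
    rw [hhom, hconj, chi_mul h3 hkc hk₀c, chi_ne_one hk₀]
    ring
  have hT := Equiv.sum_comp (Equiv.mulLeft g₀) (fun g => chi (u⁻¹ * g⁻¹ * u * g))
  have hT2 : (∑ g : G, chi (u⁻¹ * (g₀ * g)⁻¹ * u * (g₀ * g)))
      = ∑ g : G, chi (u⁻¹ * g⁻¹ * u * g) := by simpa using hT
  rw [Finset.sum_congr rfl fun g _ => key g, Finset.sum_neg_distrib] at hT2
  linarith

lemma sum_chi_sq (hc : ∀ g h : G, ⁅g, h⁆ ∈ Subgroup.center G)
    (h3 : Nat.card (Subgroup.center G) = 2) :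
    (∑ g : G, chi (g ^ 2)) * (∑ g : G, chi (g ^ 2)) = 2 * (Fintype.card G : ℤ) := by
  classical
  calc (∑ g : G, chi (g ^ 2)) * (∑ g : G, chi (g ^ 2))
      = ∑ g : G, ∑ h : G, chi (g ^ 2) * chi (h ^ 2) := by rw [Finset.sum_mul_sum]
    _ = ∑ g : G, ∑ u : G, chi (g ^ 2) * chi ((g * u) ^ 2) := by
        refine Finset.sum_congr rfl fun g _ => ?_
        have h := Equiv.sum_comp (Equiv.mulLeft g) (fun h => chi (g ^ 2) * chi (h ^ 2))
        simpa using h.symm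
    _ = ∑ g : G, ∑ u : G, chi (u ^ 2) * chi (u⁻¹ * g⁻¹ * u * g) := by
        refine Finset.sum_congr rfl fun g _ => Finset.sum_congr rfl fun u _ => ?_
        rw [mul_sq_eq hc g u,
          chi_mul h3 (mul_mem (sq_mem_center hc h3 g) (sq_mem_center hc h3 u))
            (comm_mem hc u g),
          chi_mul h3 (sq_mem_center hc h3 g) (sq_mem_center hc h3 u)]
        rw [show chi (g ^ 2) * (chi (g ^ 2) * chi (u ^ 2) * chi (u⁻¹ * g⁻¹ * u * g))
            = (chi (g ^ 2) * chi (g ^ 2)) * (chi (u ^ 2) * chi (u⁻¹ * g⁻¹ * u * g)) by ring,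
          chi_self_mul, one_mul]
    _ = ∑ u : G, ∑ g : G, chi (u ^ 2) * chi (u⁻¹ * g⁻¹ * u * g) := Finset.sum_comm
    _ = ∑ u : G, chi (u ^ 2) * (∑ g : G, chi (u⁻¹ * g⁻¹ * u * g)) := by
        refine Finset.sum_congr rfl fun u _ => ?_
        rw [Finset.mul_sum]
    _ = ∑ u : G, (if u ∈ Subgroup.center G then (Fintype.card G : ℤ) else 0) := by
        refine Finset.sum_congr rfl fun u _ => ?_
        by_cases hu : u ∈ Subgroup.center G
        · rw [if_pos hu, inner_sum_center hu]
          have h1 : chi (u ^ 2) = 1 := by rw [center_sq h3 hu, chi_one]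
          rw [h1, one_mul]
        · rw [if_neg hu, inner_sum_notcenter hc h3 hu, mul_zero]
    _ = 2 * (Fintype.card G : ℤ) := by
        rw [← Finset.sum_filter]
        rw [Finset.sum_const, nsmul_eq_mul]
        have hcard : (Finset.univ.filter (fun u : G => u ∈ Subgroup.center G)).card = 2 := by
          rw [← Fintype.card_subtype, ← Nat.card_eq_fintype_card]
          exact h3
        rw [hcard]
        push_cast
        ring

end Sum

lemma sum_chi_eq {G : Type*} [Group G] [Fintype G] :
    (∑ g : G, chi (g ^ 2))
      = 2 * (Nat.card {g : G // g ^ 2 = 1} : ℤ) - (Nat.card G : ℤ) := by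
  classical
  have h1 : (∑ g : G, chi (g ^ 2)) = ∑ g : G, (if g ^ 2 = 1 then (1 : ℤ) else -1) :=
    Finset.sum_congr rfl fun g _ => by simp [chi]
  rw [h1, Finset.sum_ite, Finset.sum_const, Finset.sum_const, nsmul_eq_mul, nsmul_eq_mul]
  have hA : (Finset.univ.filter (fun g : G => g ^ 2 = 1)).card
      = Nat.card {g : G // g ^ 2 = 1} := by
    rw [Nat.card_eq_fintype_card, Fintype.card_subtype]
  have hAB : (Finset.univ.filter (fun g : G => g ^ 2 = 1)).card
      + (Finset.univ.filter (fun g : G => ¬ g ^ 2 = 1)).card = Nat.card G := by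
    rw [Nat.card_eq_fintype_card, ← Finset.card_univ]
    exact Finset.card_filter_add_card_filter_not _
  rw [← hA, ← hAB]
  push_cast
  ring

/-- A 2-group `G` is extraspecial if `G' = Φ(G) = Z(G) ≅ ℤ/2`. -/
theorem stmt_9 (G : Type*) [Group G] [Finite G] (h2 : IsPGroup 2 G)
    (h1 : commutator G = frattini G) (h2' : frattini G = Subgroup.center G)
    (h3 : Nat.card (Subgroup.center G) = 2) :
    alpha G ≠ 3 / 4 := by
  intro h
  classical
  haveI : Fintype G := Fintype.ofFinite G
  have hc : ∀ g h' : G, ⁅g, h'⁆ ∈ Subgroup.center G := by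
    intro g h'
    have hm : ⁅g, h'⁆ ∈ commutator G :=
      Subgroup.commutator_mem_commutator (Subgroup.mem_top g) (Subgroup.mem_top h')
    rw [h1, h2'] at hm
    exact hm
  have hcount := count_key hc h3
  have hn0 : ((Nat.card G : ℚ)) ≠ 0 := Nat.cast_ne_zero.2 Nat.card_pos.ne'
  unfold alpha at h
  rw [div_eq_div_iff hn0 (by norm_num)] at h
  have h4 : 4 * Nat.card {H : Subgroup G // IsCyclic H} = 3 * Nat.card G := by
    have hq : ((4 * Nat.card {H : Subgroup G // IsCyclic H} : ℕ) : ℚ)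
        = ((3 * Nat.card G : ℕ) : ℚ) := by push_cast; linarith
    exact_mod_cast hq
  have hns : Nat.card G = 2 * Nat.card {g : G // g ^ 2 = 1} := by omega
  have hS0 : (∑ g : G, chi (g ^ 2)) = 0 := by
    rw [sum_chi_eq]
    have : (Nat.card G : ℤ) = 2 * (Nat.card {g : G // g ^ 2 = 1} : ℤ) := by
      exact_mod_cast hns
    linarith
  have hsq := sum_chi_sq hc h3
  rw [hS0] at hsq
  have hz : (Fintype.card G : ℤ) = 0 := by linarith
  have hcard0 : Fintype.card G = 0 := by exact_mod_cast hz
  have hpos := Fintype.card_pos (α := G)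
  omega
end
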